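/- Let λ, ε > 0 with λ < ε², let f(x) = Σᵢ [λ log(1 + |xᵢ|/ε) + xᵢ²/2] on ℝⁿ, and suppose x* ∈ ∂f(x). Then for any x̂ ∈ ℝⁿ, ‖x - x̂‖² ≤ (2ε²/(ε² - λ)) · D_{f,x*}(x, x̂), where D_{f,x*}(x, x̂) = f(x̂) - f(x) - ⟨x*, x̂ - x⟩. -/

import Mathlib

open scoped RealInnerProductSpace BigOperators

section AuxStmt9
open Set

lemma aux_hasDerivAt_k (eps : ℝ) (heps : 0 < eps) (r : ℝ) (hr : -eps < r) :
    HasDerivAt (fun r : ℝ => Real.log (1 + r / eps) + r ^ 2 / (2 * eps ^ 2))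
      (1 / (eps + r) + r / eps ^ 2) r := by
  have hpos : 0 < 1 + r / eps := by
    have h1 : (-1 : ℝ) < r / eps := by rw [lt_div_iff₀ heps]; linarith
    linarith
  have h1 : HasDerivAt (fun r : ℝ => Real.log (1 + r / eps)) (1 / (eps + r)) r := by
    have hd : HasDerivAt (fun r : ℝ => 1 + r / eps) (1 / eps) r := by
      simpa using ((hasDerivAt_id r).div_const eps).const_add 1
    have := hd.log (ne_of_gt hpos)
    convert this using 1
    field_simp
  have h2 : HasDerivAt (fun r : ℝ => r ^ 2 / (2 * eps ^ 2)) (r / eps ^ 2) r := by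
    have := ((hasDerivAt_pow 2 r).div_const (2 * eps ^ 2))
    refine this.congr_deriv ?_
    field_simp
    ring
  exact h1.add h2

lemma aux_hasDerivAt_k' (eps : ℝ) (heps : 0 < eps) (r : ℝ) (hr : -eps < r) :
    HasDerivAt (fun r : ℝ => 1 / (eps + r) + r / eps ^ 2)
      (1 / eps ^ 2 - 1 / (eps + r) ^ 2) r := by
  have hne : eps + r ≠ 0 := by linarith
  have h1 : HasDerivAt (fun r : ℝ => 1 / (eps + r)) (-(1 / (eps + r) ^ 2)) r := by
    have hd : HasDerivAt (fun r : ℝ => eps + r) 1 r := by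
      simpa using (hasDerivAt_id r).const_add eps
    have := hd.inv hne
    have h : -1 / (eps + r) ^ 2 = -(1 / (eps + r) ^ 2) := by ring
    have := this.congr_of_eventuallyEq (Filter.Eventually.of_forall fun y => (rfl : (fun r : ℝ => (eps + r)⁻¹) y = _))
    simpa [one_div, h] using this
  have h2 : HasDerivAt (fun r : ℝ => r / eps ^ 2) (1 / eps ^ 2) r := by
    simpa using (hasDerivAt_id r).div_const (eps ^ 2)
  have := h1.add h2
  refine this.congr_deriv ?_
  ring

lemma aux_k_convex (eps : ℝ) (heps : 0 < eps) :
    ConvexOn ℝ (Ici 0) (fun r : ℝ => Real.log (1 + r / eps) + r ^ 2 / (2 * eps ^ 2)) := by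
  have hmem : ∀ r ∈ interior (Ici (0:ℝ)), -eps < r := by
    intro r hr
    rw [interior_Ici] at hr
    have : (0:ℝ) < r := hr
    linarith
  refine convexOn_of_hasDerivWithinAt2_nonneg (convex_Ici 0) ?_
    (f' := fun r => 1 / (eps + r) + r / eps ^ 2)
    (f'' := fun r => 1 / eps ^ 2 - 1 / (eps + r) ^ 2) ?_ ?_ ?_
  · intro r hr
    have : -eps < r := by have : (0:ℝ) ≤ r := hr; linarith
    exact (aux_hasDerivAt_k eps heps r this).continuousAt.continuousWithinAt
  · intro r hr
    exact (aux_hasDerivAt_k eps heps r (hmem r hr)).hasDerivWithinAt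
  · intro r hr
    exact (aux_hasDerivAt_k' eps heps r (hmem r hr)).hasDerivWithinAt
  · intro r hr
    have hr' : (0:ℝ) < r := by rw [interior_Ici] at hr; exact hr
    have h1 : eps ^ 2 ≤ (eps + r) ^ 2 := by nlinarith
    have h2 : (0:ℝ) < eps ^ 2 := by positivity
    have h3 : (0:ℝ) < (eps + r) ^ 2 := by nlinarith
    have := one_div_le_one_div_of_le h2 h1
    linarith

lemma aux_k_mono (eps : ℝ) (heps : 0 < eps) :
    MonotoneOn (fun r : ℝ => Real.log (1 + r / eps) + r ^ 2 / (2 * eps ^ 2)) (Ici 0) := by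
  refine monotoneOn_of_deriv_nonneg (convex_Ici 0) ?_ ?_ ?_
  · intro r hr
    have : -eps < r := by have : (0:ℝ) ≤ r := hr; linarith
    exact (aux_hasDerivAt_k eps heps r this).continuousAt.continuousWithinAt
  · intro r hr
    rw [interior_Ici] at hr
    have : -eps < r := by have : (0:ℝ) < r := hr; linarith
    exact (aux_hasDerivAt_k eps heps r this).differentiableAt.differentiableWithinAt
  · intro r hr
    rw [interior_Ici] at hr
    have hr' : (0:ℝ) < r := hr
    have h : -eps < r := by linarith
    rw [(aux_hasDerivAt_k eps heps r h).deriv]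
    have : (0:ℝ) < eps + r := by linarith
    positivity

lemma aux_h0_convex (eps : ℝ) (heps : 0 < eps) :
    ConvexOn ℝ univ (fun a : ℝ => Real.log (1 + |a| / eps) + |a| ^ 2 / (2 * eps ^ 2)) := by
  have himg : (fun a : ℝ => |a|) '' univ = Ici 0 := by
    ext r
    simp only [image_univ, mem_range, mem_Ici]
    constructor
    · rintro ⟨a, rfl⟩; exact abs_nonneg a
    · intro hr; exact ⟨r, abs_of_nonneg hr⟩
  have habs : ConvexOn ℝ univ (fun a : ℝ => |a|) := by
    have := convexOn_univ_norm (E := ℝ)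
    exact this
  have := ConvexOn.comp (f := fun a : ℝ => |a|)
    (g := fun r : ℝ => Real.log (1 + r / eps) + r ^ 2 / (2 * eps ^ 2))
    (by rw [himg]; exact aux_k_convex eps heps) habs
    (by rw [himg]; exact aux_k_mono eps heps)
  exact this

lemma aux_coord (lam eps : ℝ) (hlam : 0 < lam) (heps : 0 < eps) (t a b : ℝ)
    (ht0 : 0 ≤ t) (ht1 : t ≤ 1) :
    2 * eps ^ 2 * (lam * Real.log (1 + |(1 - t) * a + t * b| / eps) + ((1 - t) * a + t * b) ^ 2 / 2)
      ≤ 2 * eps ^ 2 * ((1 - t) * (lam * Real.log (1 + |a| / eps) + a ^ 2 / 2)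
          + t * (lam * Real.log (1 + |b| / eps) + b ^ 2 / 2))
        - (eps ^ 2 - lam) * (t * (1 - t) * (a - b) ^ 2) := by
  have hconv := aux_h0_convex eps heps
  have hz := hconv.2 (mem_univ a) (mem_univ b) (by linarith : (0:ℝ) ≤ 1 - t) ht0 (by ring)
  simp only [smul_eq_mul, sq_abs] at hz
  have hE : (0:ℝ) < eps ^ 2 := by positivity
  set La := Real.log (1 + |a| / eps) with hLa
  set Lb := Real.log (1 + |b| / eps) with hLb
  set Lz := Real.log (1 + |(1 - t) * a + t * b| / eps) with hLz
  have hz2 := mul_le_mul_of_nonneg_left hz (by positivity : (0:ℝ) ≤ 2 * eps ^ 2 * lam)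
  have hz3 : 2 * eps ^ 2 * lam * Lz + lam * ((1 - t) * a + t * b) ^ 2
      ≤ 2 * eps ^ 2 * lam * ((1 - t) * La + t * Lb) + lam * ((1 - t) * a ^ 2 + t * b ^ 2) := by
    have h1 : 2 * eps ^ 2 * lam * Lz + lam * ((1 - t) * a + t * b) ^ 2
        = 2 * eps ^ 2 * lam * (Lz + ((1 - t) * a + t * b) ^ 2 / (2 * eps ^ 2)) := by
      field_simp
    have h2 : 2 * eps ^ 2 * lam * ((1 - t) * (La + a ^ 2 / (2 * eps ^ 2))
          + t * (Lb + b ^ 2 / (2 * eps ^ 2)))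
        = 2 * eps ^ 2 * lam * ((1 - t) * La + t * Lb)
          + lam * ((1 - t) * a ^ 2 + t * b ^ 2) := by
      field_simp; ring
    rw [h1, ← h2]; exact hz2
  have hfinal : 2 * eps ^ 2 * (lam * Lz + ((1 - t) * a + t * b) ^ 2 / 2)
      - (2 * eps ^ 2 * ((1 - t) * (lam * La + a ^ 2 / 2) + t * (lam * Lb + b ^ 2 / 2))
        - (eps ^ 2 - lam) * (t * (1 - t) * (a - b) ^ 2))
      = (2 * eps ^ 2 * lam * Lz + lam * ((1 - t) * a + t * b) ^ 2)
        - (2 * eps ^ 2 * lam * ((1 - t) * La + t * Lb)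
          + lam * ((1 - t) * a ^ 2 + t * b ^ 2)) := by ring
  linarith [hz3, hfinal]


end AuxStmt9

/-- For the log-sum regularized objective
f(x) = Σᵢ [λ log(1 + |xᵢ|/ε) + xᵢ²/2] with λ < ε², and x* ∈ ∂f(x),
‖x - x̂‖² ≤ (2ε²/(ε² - λ)) · (f(x̂) - f(x) - ⟨x*, x̂ - x⟩). -/
theorem stmt_9 (n : ℕ) (lam eps : ℝ) (hlam : 0 < lam) (heps : 0 < eps)
    (hle : lam < eps ^ 2)
    (f : EuclideanSpace ℝ (Fin n) → ℝ)
    (hdef : ∀ x, f x = ∑ i, (lam * Real.log (1 + |x i| / eps) + (x i) ^ 2 / 2))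
    (x xstar xhat : EuclideanSpace ℝ (Fin n))
    (hsub : ∀ z, f z ≥ f x + ⟪xstar, z - x⟫) :
    ‖x - xhat‖ ^ 2 ≤
      (2 * eps ^ 2 / (eps ^ 2 - lam)) * (f xhat - f x - ⟪xstar, xhat - x⟫) := by
  have hE : (0:ℝ) < eps ^ 2 := by positivity
  have hEl : (0:ℝ) < eps ^ 2 - lam := by linarith
  set N : ℝ := ∑ i, (x i - xhat i) ^ 2 with hN
  set I : ℝ := ⟪xstar, xhat - x⟫ with hI
  set D : ℝ := f xhat - f x - I with hD
  have hNnn : 0 ≤ N := Finset.sum_nonneg fun i _ => sq_nonneg _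
  have hnorm : ‖x - xhat‖ ^ 2 = N := by
    rw [EuclideanSpace.norm_eq, Real.sq_sqrt (by positivity)]
    exact Finset.sum_congr rfl fun i _ => by
      simp [Real.norm_eq_abs, sq_abs]
  have hkey : ∀ t : ℝ, 0 < t → t < 1 → (eps ^ 2 - lam) * ((1 - t) * N) ≤ 2 * eps ^ 2 * D := by
    intro t ht0 ht1
    set z : EuclideanSpace ℝ (Fin n) := x + t • (xhat - x) with hz
    have hzi : ∀ i, z i = (1 - t) * x i + t * xhat i := by
      intro i
      simp [hz]
      ring
    have h1 : ∀ i : Fin n,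
        2 * eps ^ 2 * (lam * Real.log (1 + |z i| / eps) + (z i) ^ 2 / 2)
          ≤ 2 * eps ^ 2 * (1 - t) * (lam * Real.log (1 + |x i| / eps) + (x i) ^ 2 / 2)
            + 2 * eps ^ 2 * t * (lam * Real.log (1 + |xhat i| / eps) + (xhat i) ^ 2 / 2)
            - (eps ^ 2 - lam) * t * (1 - t) * (x i - xhat i) ^ 2 := by
      intro i
      rw [hzi i]
      have := aux_coord lam eps hlam heps t (x i) (xhat i) ht0.le ht1.le
      linarith
    have hsum := Finset.sum_le_sum (fun i (_ : i ∈ Finset.univ) => h1 i)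
    have hfz : 2 * eps ^ 2 * f z
        ≤ 2 * eps ^ 2 * (1 - t) * f x + 2 * eps ^ 2 * t * f xhat
          - (eps ^ 2 - lam) * t * (1 - t) * N := by
      rw [hdef z, hdef x, hdef xhat, hN]
      rw [Finset.mul_sum]
      refine hsum.trans_eq ?_
      rw [Finset.sum_sub_distrib, Finset.sum_add_distrib, ← Finset.mul_sum, ← Finset.mul_sum,
        ← Finset.mul_sum]
    have hzx : z - x = t • (xhat - x) := add_sub_cancel_left x _
    have hinner : ⟪xstar, z - x⟫ = t * I := by
      rw [hzx, real_inner_smul_right, hI]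
    have hs := hsub z
    rw [hinner] at hs
    have hs2 : 2 * eps ^ 2 * (f x + t * I) ≤ 2 * eps ^ 2 * f z :=
      mul_le_mul_of_nonneg_left hs (by positivity)
    have ht : t * ((eps ^ 2 - lam) * ((1 - t) * N)) ≤ t * (2 * eps ^ 2 * D) := by
      rw [hD]
      nlinarith [hs2, hfz]
    exact le_of_mul_le_mul_left ht ht0
  have hfin : N * (eps ^ 2 - lam) ≤ 2 * eps ^ 2 * D := by
    by_contra hc
    push_neg at hc
    set c : ℝ := (eps ^ 2 - lam) * N with hc'
    set D' : ℝ := 2 * eps ^ 2 * D with hD'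
    have hcd : D' < c := by rw [hc']; linarith [hc]
    have hhalf := hkey (1/2) (by norm_num) (by norm_num)
    have hch : c * (1/2) ≤ D' := by rw [hc']; linarith [hhalf]
    have hcpos : 0 < c := by linarith
    set t₀ : ℝ := (c - D') / (2 * c) with ht₀
    have ht0 : 0 < t₀ := div_pos (by linarith) (by linarith)
    have ht1 : t₀ < 1 := by
      rw [ht₀, div_lt_one (by linarith)]
      linarith
    have h := hkey t₀ ht0 ht1
    have heq : (eps ^ 2 - lam) * ((1 - t₀) * N) = (c + D') / 2 := by
      rw [ht₀, show (eps ^ 2 - lam) * ((1 - (c - D') / (2 * c)) * N) = c * (1 - (c - D') / (2 * c)) by rw [hc']; ring]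
      field_simp [hcpos.ne']
      ring
    linarith
  rw [hnorm, div_mul_eq_mul_div, le_div_iff₀ hEl]
  linarith [hfin]
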